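/- The complex vector space spanned, inside the space of all functions H₂ → ℂ, by the ten functions Θ_m⁴ for m running over the even half-integer characteristics, has dimension at most 6. (These linear relations among the coordinates of ψ allow one to view the image ψ(A₂(2)^S(ℂ)) as a quartic hypersurface in ℙ⁵.) -/

import Mathlib

open scoped BigOperators
open Complex Matrix

noncomputable section

/-- `τ` belongs to the Siegel upper half-space of degree 2: it is a symmetric
`2 × 2` complex matrix whose imaginary part is positive definite. -/
def IsSiegel (τ : Matrix (Fin 2) (Fin 2) ℂ) : Prop :=
  τ.IsSymm ∧ (Matrix.of fun i j => (τ i j).im).PosDef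

/-- The term of index `n ∈ ℤ²` of the theta series with characteristic `(a, b)`. -/
def thetaTerm (a b : Fin 2 → ℝ) (τ : Matrix (Fin 2) (Fin 2) ℂ) (n : Fin 2 → ℤ) : ℂ :=
  Complex.exp (2 * Real.pi * Complex.I *
      (∑ i, ∑ j, ((n i : ℂ) + (a i : ℂ)) * τ i j * ((n j : ℂ) + (a j : ℂ)))
    + 2 * Real.pi * Complex.I * (∑ i, (n i : ℂ) * (b i : ℂ)))

/-- The theta constant `Θ_{(a,b)}(τ)`. -/
def Theta (a b : Fin 2 → ℝ) (τ : Matrix (Fin 2) (Fin 2) ℂ) : ℂ :=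
  ∑' n : Fin 2 → ℤ, thetaTerm a b τ n

/-- `(a, b)` is a half-integer characteristic when all entries lie in `{0, 1/2}`. -/
def IsHalf (a : Fin 2 → ℝ) : Prop := ∀ i, a i = 0 ∨ a i = 1 / 2

lemma summable_exp_neg_sq {c : ℝ} (hc : 0 < c) :
    Summable fun n : ℤ => Real.exp (-c * (n : ℝ) ^ 2) := by
  suffices H : Summable fun n : ℕ => Real.exp (-c * (n : ℝ) ^ 2) by
    apply Summable.of_nat_of_neg <;> simpa using H
  have h1 : Summable fun n : ℕ => Real.exp (-c) ^ n :=
    summable_geometric_of_lt_one (Real.exp_nonneg _) (by rw [Real.exp_lt_one_iff]; linarith)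
  refine h1.of_nonneg_of_le (fun n => (Real.exp_pos _).le) fun n => ?_
  rw [← Real.exp_nat_mul]
  apply Real.exp_le_exp.2
  have h2 : (n : ℝ) ≤ (n : ℝ) ^ 2 := by exact_mod_cast Nat.le_self_pow two_ne_zero n
  nlinarith [mul_le_mul_of_nonneg_left h2 hc.le]

lemma norm_thetaTerm (a b : Fin 2 → ℝ) (τ : Matrix (Fin 2) (Fin 2) ℂ) (n : Fin 2 → ℤ) :
    ‖thetaTerm a b τ n‖ = Real.exp (-(2 * Real.pi) *
      (((n 0 : ℝ) + a 0) ^ 2 * (τ 0 0).im + ((n 0 : ℝ) + a 0) * ((n 1 : ℝ) + a 1) * ((τ 0 1).im + (τ 1 0).im)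
        + ((n 1 : ℝ) + a 1) ^ 2 * (τ 1 1).im)) := by
  rw [thetaTerm, Complex.norm_exp]
  congr 1
  simp only [Fin.sum_univ_two, Complex.add_re, Complex.mul_re, Complex.mul_im,
    Complex.I_re, Complex.I_im, Complex.ofReal_re, Complex.ofReal_im,
    Complex.intCast_re, Complex.intCast_im, Complex.add_im, mul_zero,
    mul_one, zero_mul, one_mul, sub_zero, zero_sub, add_zero, zero_add, neg_zero,
    Complex.re_ofNat, Complex.im_ofNat]
  ring

lemma quad_lower (A B C : ℝ) (hA : 0 < A) (hC : 0 < C) (hD : 0 < 4 * (A * C) - B ^ 2) :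
    ∃ ε > 0, ∀ x0 x1 : ℝ, ε * (x0 ^ 2 + x1 ^ 2) ≤ x0 ^ 2 * A + x0 * x1 * B + x1 ^ 2 * C := by
  obtain ⟨ε, hεpos, hsum, hεA⟩ : ∃ ε : ℝ, 0 < ε ∧ ε * (A + C) * 4 = 4 * (A * C) - B ^ 2 ∧ ε < A :=
    ⟨(4 * (A * C) - B ^ 2) / (4 * (A + C)), by positivity, by field_simp,
      by rw [div_lt_iff₀ (by positivity)]; nlinarith [sq_nonneg B]⟩
  refine ⟨ε, hεpos, fun x0 x1 => ?_⟩
  have expand : (A - ε) * ((A - ε) * x0 ^ 2 + B * (x0 * x1) + (C - ε) * x1 ^ 2)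
      = ((A - ε) * x0 + B / 2 * x1) ^ 2 + (ε * x1) ^ 2 := by
    linear_combination (-(x1 ^ 2) / 4) * hsum
  nlinarith [expand, sq_nonneg ((A - ε) * x0 + B / 2 * x1), sq_nonneg (ε * x1), hεA, hεpos]

lemma posdef_bound {Y : Matrix (Fin 2) (Fin 2) ℝ} (hY : Y.PosDef) :
    ∃ ε > 0, ∀ x0 x1 : ℝ, ε * (x0 ^ 2 + x1 ^ 2) ≤
      x0 ^ 2 * Y 0 0 + x0 * x1 * (Y 0 1 + Y 1 0) + x1 ^ 2 * Y 1 1 := by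
  have key : ∀ x0 x1 : ℝ, ¬(x0 = 0 ∧ x1 = 0) →
      0 < x0 ^ 2 * Y 0 0 + x0 * x1 * (Y 0 1 + Y 1 0) + x1 ^ 2 * Y 1 1 := by
    intro x0 x1 h
    have hx : (![x0, x1] : Fin 2 → ℝ) ≠ 0 := by
      intro hcontra
      exact h ⟨by simpa using congrFun hcontra 0, by simpa using congrFun hcontra 1⟩
    have := hY.dotProduct_mulVec_pos hx
    simp [dotProduct, Matrix.mulVec, Fin.sum_univ_two] at this
    nlinarith [this]
  have hA : 0 < Y 0 0 := by have := key 1 0 (by norm_num); nlinarith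
  have hC : 0 < Y 1 1 := by have := key 0 1 (by norm_num); nlinarith
  have hD : 0 < 4 * (Y 0 0 * Y 1 1) - (Y 0 1 + Y 1 0) ^ 2 := by
    have := key (Y 0 1 + Y 1 0) (-(2 * Y 0 0)) (fun ⟨h1, h2⟩ => by nlinarith)
    nlinarith
  exact quad_lower _ _ _ hA hC hD

set_option maxHeartbeats 1000000 in
lemma summable_norm_thetaTerm (a b : Fin 2 → ℝ) {τ : Matrix (Fin 2) (Fin 2) ℂ}
    (hτ : (Matrix.of fun i j => (τ i j).im).PosDef) :
    Summable fun n : Fin 2 → ℤ => ‖thetaTerm a b τ n‖ := by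
  obtain ⟨ε, hε, hq⟩ := posdef_bound hτ
  simp only [Matrix.of_apply] at hq
  set g : ℤ → ℝ := fun k => Real.exp (-(Real.pi * ε) * (k : ℝ) ^ 2) with hg
  have hgs : Summable g := summable_exp_neg_sq (by positivity)
  have hprod : Summable fun p : ℤ × ℤ => g p.1 * g p.2 :=
    hgs.mul_of_nonneg hgs (fun k => (Real.exp_pos _).le) fun k => (Real.exp_pos _).le
  have hpi : Summable fun n : Fin 2 → ℤ => g (n 0) * g (n 1) :=
    ((piFinTwoEquiv fun _ => ℤ).summable_iff).2 hprod
  refine Summable.of_nonneg_of_le (fun n => norm_nonneg _) (fun n => ?_)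
    ((hpi.mul_left (Real.exp (2 * Real.pi * ε * (a 0 ^ 2 + a 1 ^ 2)))))
  rw [norm_thetaTerm]
  rw [← Real.exp_add, ← Real.exp_add]
  apply Real.exp_le_exp.2
  have h1 := hq ((n 0 : ℝ) + a 0) ((n 1 : ℝ) + a 1)
  have s0 : (n 0 : ℝ) ^ 2 / 2 - a 0 ^ 2 ≤ ((n 0 : ℝ) + a 0) ^ 2 := by
    nlinarith [sq_nonneg ((n 0 : ℝ) + 2 * a 0)]
  have s1 : (n 1 : ℝ) ^ 2 / 2 - a 1 ^ 2 ≤ ((n 1 : ℝ) + a 1) ^ 2 := by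
    nlinarith [sq_nonneg ((n 1 : ℝ) + 2 * a 1)]
  have key : ε * ((n 0 : ℝ) ^ 2 / 2 - a 0 ^ 2 + ((n 1 : ℝ) ^ 2 / 2 - a 1 ^ 2)) ≤
      ((n 0 : ℝ) + a 0) ^ 2 * (τ 0 0).im +
        ((n 0 : ℝ) + a 0) * ((n 1 : ℝ) + a 1) * ((τ 0 1).im + (τ 1 0).im) +
        ((n 1 : ℝ) + a 1) ^ 2 * (τ 1 1).im := by
    refine le_trans ?_ h1
    nlinarith [mul_le_mul_of_nonneg_left (add_le_add s0 s1) hε.le]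
  nlinarith [mul_le_mul_of_nonneg_left key (le_of_lt (mul_pos two_pos Real.pi_pos))]

lemma summable_thetaTerm (a b : Fin 2 → ℝ) {τ : Matrix (Fin 2) (Fin 2) ℂ}
    (hτ : (Matrix.of fun i j => (τ i j).im).PosDef) :
    Summable fun n : Fin 2 → ℤ => thetaTerm a b τ n :=
  (summable_norm_thetaTerm a b hτ).of_norm

def nu (r : Bool × Bool) : Fin 2 → ℤ := ![cond r.1 1 0, cond r.2 1 0]

lemma mix_bij : Function.Bijective
    (fun w : (Bool × Bool) × ((Fin 2 → ℤ) × (Fin 2 → ℤ)) =>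
      ((w.2.1 + w.2.2 + nu w.1, w.2.1 - w.2.2) : (Fin 2 → ℤ) × (Fin 2 → ℤ))) := by
  constructor
  · rintro ⟨⟨r1, r2⟩, u, v⟩ ⟨⟨s1, s2⟩, u', v'⟩ h
    simp only [Prod.mk.injEq] at h ⊢
    obtain ⟨h1, h2⟩ := h
    have e0 := congrFun h1 0
    have e1 := congrFun h1 1
    have f0 := congrFun h2 0
    have f1 := congrFun h2 1
    simp only [Pi.add_apply, Pi.sub_apply, nu, Matrix.cons_val_zero, Matrix.cons_val_one,
      Matrix.head_cons] at e0 e1 f0 f1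
    have hr1 : r1 = s1 := by cases r1 <;> cases s1 <;> simp_all <;> omega
    have hr2 : r2 = s2 := by cases r2 <;> cases s2 <;> simp_all <;> omega
    subst hr1; subst hr2
    have hu0 : u 0 = u' 0 := by omega
    have hu1 : u 1 = u' 1 := by omega
    have hv0 : v 0 = v' 0 := by omega
    have hv1 : v 1 = v' 1 := by omega
    refine ⟨⟨rfl, rfl⟩, funext fun i => ?_, funext fun i => ?_⟩ <;> fin_cases i <;> assumption
  · rintro ⟨n, m⟩
    rcases Int.even_or_odd (n 0 + m 0) with h0 | h0 <;>
      rcases Int.even_or_odd (n 1 + m 1) with h1 | h1 <;>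
      [skip; skip; skip; skip] <;>
      first
      | (rw [Int.even_iff] at h0 h1)
      | (rw [Int.even_iff] at h0; rw [Int.odd_iff] at h1)
      | (rw [Int.odd_iff] at h0; rw [Int.even_iff] at h1)
      | (rw [Int.odd_iff] at h0 h1)
    · exact ⟨⟨(false, false), fun i => (n i + m i) / 2, fun i => (n i - m i) / 2⟩, by
        simp only [Prod.mk.injEq]
        refine ⟨funext fun i => ?_, funext fun i => ?_⟩ <;> fin_cases i <;>
          simp [nu] <;> omega⟩
    · exact ⟨⟨(false, true), fun i => (n i + m i - nu (false, true) i) / 2,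
        fun i => (n i - m i - nu (false, true) i) / 2⟩, by
        simp only [Prod.mk.injEq]
        refine ⟨funext fun i => ?_, funext fun i => ?_⟩ <;> fin_cases i <;>
          simp [nu] <;> omega⟩
    · exact ⟨⟨(true, false), fun i => (n i + m i - nu (true, false) i) / 2,
        fun i => (n i - m i - nu (true, false) i) / 2⟩, by
        simp only [Prod.mk.injEq]
        refine ⟨funext fun i => ?_, funext fun i => ?_⟩ <;> fin_cases i <;>
          simp [nu] <;> omega⟩
    · exact ⟨⟨(true, true), fun i => (n i + m i - nu (true, true) i) / 2,
        fun i => (n i - m i - nu (true, true) i) / 2⟩, by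
        simp only [Prod.mk.injEq]
        refine ⟨funext fun i => ?_, funext fun i => ?_⟩ <;> fin_cases i <;>
          simp [nu] <;> omega⟩

lemma term_mul_term (a b : Fin 2 → ℝ) (hb : IsHalf b) (τ : Matrix (Fin 2) (Fin 2) ℂ)
    (r : Bool × Bool) (u v : Fin 2 → ℤ) :
    thetaTerm a b τ (u + v + nu r) * thetaTerm a b τ (u - v) =
      Complex.exp (2 * Real.pi * Complex.I *
          ((nu r 0 : ℂ) * (b 0 : ℂ) + (nu r 1 : ℂ) * (b 1 : ℂ))) *
        (thetaTerm (fun i => a i + (nu r i : ℝ) / 2) 0 ((2 : ℂ) • τ) u *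
          thetaTerm (fun i => (nu r i : ℝ) / 2) 0 ((2 : ℂ) • τ) v) := by
  obtain ⟨k0, hk0⟩ : ∃ k : ℤ, (b 0 : ℂ) * 2 = (k : ℂ) := by
    rcases hb 0 with h | h
    · exact ⟨0, by rw [h]; norm_num⟩
    · exact ⟨1, by rw [h]; norm_num⟩
  obtain ⟨k1, hk1⟩ : ∃ k : ℤ, (b 1 : ℂ) * 2 = (k : ℂ) := by
    rcases hb 1 with h | h
    · exact ⟨0, by rw [h]; norm_num⟩
    · exact ⟨1, by rw [h]; norm_num⟩
  unfold thetaTerm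
  rw [← Complex.exp_add, ← Complex.exp_add, ← Complex.exp_add]
  rw [Complex.exp_eq_exp_iff_exists_int]
  refine ⟨u 0 * k0 + u 1 * k1, ?_⟩
  simp only [Fin.sum_univ_two, Pi.add_apply, Pi.sub_apply, Pi.zero_apply,
    Matrix.smul_apply, smul_eq_mul]
  push_cast
  linear_combination (2 * (Real.pi : ℂ) * Complex.I * (u 0 : ℂ)) * hk0 +
    (2 * (Real.pi : ℂ) * Complex.I * (u 1 : ℂ)) * hk1

lemma posdef_double {τ : Matrix (Fin 2) (Fin 2) ℂ}
    (hτ : (Matrix.of fun i j => (τ i j).im).PosDef) :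
    (Matrix.of fun i j => ((((2 : ℂ) • τ) i j)).im).PosDef := by
  have hE : (Matrix.of fun i j => ((((2 : ℂ) • τ) i j)).im)
      = (2 : ℝ) • (Matrix.of fun i j => (τ i j).im) := by
    ext i j
    simp [Matrix.smul_apply, smul_eq_mul, Complex.mul_im]
  rw [hE]
  refine Matrix.PosDef.of_dotProduct_mulVec_pos ?_ fun x hx => ?_
  · unfold Matrix.IsHermitian
    rw [Matrix.conjTranspose_smul, star_trivial, hτ.1]
  · have h := hτ.dotProduct_mulVec_pos hx
    rw [Matrix.smul_mulVec, dotProduct_smul, smul_eq_mul]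
    linarith

lemma theta_sq (a b : Fin 2 → ℝ) (hb : IsHalf b) {τ : Matrix (Fin 2) (Fin 2) ℂ}
    (hτ : (Matrix.of fun i j => (τ i j).im).PosDef) :
    Theta a b τ ^ 2 = ∑ r : Bool × Bool,
      Complex.exp (2 * Real.pi * Complex.I *
          ((nu r 0 : ℂ) * (b 0 : ℂ) + (nu r 1 : ℂ) * (b 1 : ℂ))) *
        (Theta (fun i => a i + (nu r i : ℝ) / 2) 0 ((2 : ℂ) • τ) *
          Theta (fun i => (nu r i : ℝ) / 2) 0 ((2 : ℂ) • τ)) := by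
  have hτ2 := posdef_double hτ
  have hn := summable_norm_thetaTerm a b hτ
  have hz : Summable fun z : (Fin 2 → ℤ) × (Fin 2 → ℤ) =>
      thetaTerm a b τ z.1 * thetaTerm a b τ z.2 := summable_mul_of_summable_norm hn hn
  have e := Equiv.ofBijective _ mix_bij
  rw [sq, Theta, tsum_mul_tsum_of_summable_norm hn hn,
    ← (Equiv.ofBijective _ mix_bij).tsum_eq
      (fun z : (Fin 2 → ℤ) × (Fin 2 → ℤ) => thetaTerm a b τ z.1 * thetaTerm a b τ z.2)]
  have hw : Summable fun w : (Bool × Bool) × ((Fin 2 → ℤ) × (Fin 2 → ℤ)) =>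
      thetaTerm a b τ ((Equiv.ofBijective _ mix_bij) w).1 *
        thetaTerm a b τ ((Equiv.ofBijective _ mix_bij) w).2 :=
    ((Equiv.ofBijective _ mix_bij).summable_iff).2 hz
  rw [hw.tsum_prod, tsum_fintype]
  refine Finset.sum_congr rfl fun r _ => ?_
  have hG := summable_norm_thetaTerm (fun i => a i + (nu r i : ℝ) / 2) 0 hτ2
  have hH := summable_norm_thetaTerm (fun i => (nu r i : ℝ) / 2) 0 hτ2
  calc (∑' p : (Fin 2 → ℤ) × (Fin 2 → ℤ),
        thetaTerm a b τ ((Equiv.ofBijective _ mix_bij) (r, p)).1 *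
          thetaTerm a b τ ((Equiv.ofBijective _ mix_bij) (r, p)).2)
      = ∑' p : (Fin 2 → ℤ) × (Fin 2 → ℤ),
          Complex.exp (2 * Real.pi * Complex.I *
              ((nu r 0 : ℂ) * (b 0 : ℂ) + (nu r 1 : ℂ) * (b 1 : ℂ))) *
            (thetaTerm (fun i => a i + (nu r i : ℝ) / 2) 0 ((2 : ℂ) • τ) p.1 *
              thetaTerm (fun i => (nu r i : ℝ) / 2) 0 ((2 : ℂ) • τ) p.2) := by
        refine tsum_congr fun p => ?_
        have := term_mul_term a b hb τ r p.1 p.2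
        simpa using this
    _ = Complex.exp (2 * Real.pi * Complex.I *
              ((nu r 0 : ℂ) * (b 0 : ℂ) + (nu r 1 : ℂ) * (b 1 : ℂ))) *
          (Theta (fun i => a i + (nu r i : ℝ) / 2) 0 ((2 : ℂ) • τ) *
            Theta (fun i => (nu r i : ℝ) / 2) 0 ((2 : ℂ) • τ)) := by
        rw [tsum_mul_left, Theta, Theta, tsum_mul_tsum_of_summable_norm hG hH]

lemma theta_shift (c : Fin 2 → ℝ) (e : Fin 2 → ℤ) (a' : Fin 2 → ℝ)
    (h : ∀ i, a' i = c i + (e i : ℝ)) (σ : Matrix (Fin 2) (Fin 2) ℂ) :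
    Theta a' 0 σ = Theta c 0 σ := by
  rw [Theta, Theta, ← (Equiv.addRight e).tsum_eq (fun n => thetaTerm c 0 σ n)]
  refine tsum_congr fun n => ?_
  unfold thetaTerm
  congr 1
  have h0 := h 0
  have h1 := h 1
  simp only [Fin.sum_univ_two, Pi.zero_apply, Equiv.coe_addRight, Pi.add_apply, h0, h1]
  push_cast
  ring

lemma conv (a' : Fin 2 → ℝ) (s t : ℝ) (e0 e1 : ℤ) (h0 : a' 0 = s + (e0 : ℝ))
    (h1 : a' 1 = t + (e1 : ℝ)) (σ : Matrix (Fin 2) (Fin 2) ℂ) :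
    Theta a' 0 σ = Theta ![s, t] 0 σ := by
  refine theta_shift ![s, t] ![e0, e1] a' (fun i => ?_) σ
  fin_cases i
  · simpa using h0
  · simpa using h1

lemma sigma_zero (x : ℝ) (h : x = 0) :
    Complex.exp (2 * Real.pi * Complex.I * (x : ℂ)) = 1 := by
  rw [h]; simp

lemma sigma_half (x : ℝ) (h : x = 1 / 2) :
    Complex.exp (2 * Real.pi * Complex.I * (x : ℂ)) = -1 := by
  rw [h, show 2 * (Real.pi : ℂ) * Complex.I * ((1 / 2 : ℝ) : ℂ) = Real.pi * Complex.I by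
    push_cast; ring, Complex.exp_pi_mul_I]

lemma sigma_one (x : ℝ) (h : x = 1) :
    Complex.exp (2 * Real.pi * Complex.I * (x : ℂ)) = 1 := by
  rw [h, show 2 * (Real.pi : ℂ) * Complex.I * ((1 : ℝ) : ℂ) = 2 * Real.pi * Complex.I by
    push_cast; ring, Complex.exp_two_pi_mul_I]

lemma fam0 (a b : Fin 2 → ℝ) (hb : IsHalf b) (ha0 : a 0 = 0) (ha1 : a 1 = 0)
    {τ : Matrix (Fin 2) (Fin 2) ℂ} (hτ : (Matrix.of fun i j => (τ i j).im).PosDef) :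
    Theta a b τ ^ 2 =
      Theta ![0, 0] 0 ((2 : ℂ) • τ) ^ 2
      + Complex.exp (2 * Real.pi * Complex.I * ((b 0 : ℝ) : ℂ)) *
          Theta ![1 / 2, 0] 0 ((2 : ℂ) • τ) ^ 2
      + Complex.exp (2 * Real.pi * Complex.I * ((b 1 : ℝ) : ℂ)) *
          Theta ![0, 1 / 2] 0 ((2 : ℂ) • τ) ^ 2
      + Complex.exp (2 * Real.pi * Complex.I * ((b 0 + b 1 : ℝ) : ℂ)) *
          Theta ![1 / 2, 1 / 2] 0 ((2 : ℂ) • τ) ^ 2 := by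
  rw [theta_sq a b hb hτ]
  rw [Fintype.sum_prod_type, Fintype.sum_bool]
  rw [Fintype.sum_bool, Fintype.sum_bool]
  rw [conv (fun i => a i + ((nu (true, true) i : ℤ) : ℝ) / 2) (1/2) (1/2) 0 0
      (by simp [nu, ha0]) (by simp [nu, ha1]) _,
    conv (fun i => ((nu (true, true) i : ℤ) : ℝ) / 2) (1/2) (1/2) 0 0
      (by simp [nu]) (by simp [nu]) _,
    conv (fun i => a i + ((nu (true, false) i : ℤ) : ℝ) / 2) (1/2) 0 0 0
      (by simp [nu, ha0]) (by simp [nu, ha1]) _,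
    conv (fun i => ((nu (true, false) i : ℤ) : ℝ) / 2) (1/2) 0 0 0
      (by simp [nu]) (by simp [nu]) _,
    conv (fun i => a i + ((nu (false, true) i : ℤ) : ℝ) / 2) 0 (1/2) 0 0
      (by simp [nu, ha0]) (by simp [nu, ha1]) _,
    conv (fun i => ((nu (false, true) i : ℤ) : ℝ) / 2) 0 (1/2) 0 0
      (by simp [nu]) (by simp [nu]) _,
    conv (fun i => a i + ((nu (false, false) i : ℤ) : ℝ) / 2) 0 0 0 0
      (by simp [nu, ha0]) (by simp [nu, ha1]) _,
    conv (fun i => ((nu (false, false) i : ℤ) : ℝ) / 2) 0 0 0 0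
      (by simp [nu]) (by simp [nu]) _]
  rw [show ((nu (false, false) 0 : ℤ) : ℂ) * (b 0 : ℂ) + ((nu (false, false) 1 : ℤ) : ℂ) * (b 1 : ℂ)
      = 0 by simp [nu]]
  rw [show ((nu (true, false) 0 : ℤ) : ℂ) * (b 0 : ℂ) + ((nu (true, false) 1 : ℤ) : ℂ) * (b 1 : ℂ)
      = ((b 0 : ℝ) : ℂ) by simp [nu]]
  rw [show ((nu (false, true) 0 : ℤ) : ℂ) * (b 0 : ℂ) + ((nu (false, true) 1 : ℤ) : ℂ) * (b 1 : ℂ)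
      = ((b 1 : ℝ) : ℂ) by simp [nu]]
  rw [show ((nu (true, true) 0 : ℤ) : ℂ) * (b 0 : ℂ) + ((nu (true, true) 1 : ℤ) : ℂ) * (b 1 : ℂ)
      = ((b 0 + b 1 : ℝ) : ℂ) by push_cast; simp [nu]]
  simp only [mul_zero, Complex.exp_zero]
  ring

lemma fam1 (a b : Fin 2 → ℝ) (hb : IsHalf b) (ha0 : a 0 = 1 / 2) (ha1 : a 1 = 0)
    {τ : Matrix (Fin 2) (Fin 2) ℂ} (hτ : (Matrix.of fun i j => (τ i j).im).PosDef) :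
    Theta a b τ ^ 2 =
      Theta ![1 / 2, 0] 0 ((2 : ℂ) • τ) * Theta ![0, 0] 0 ((2 : ℂ) • τ)
      + Complex.exp (2 * Real.pi * Complex.I * ((b 0 : ℝ) : ℂ)) *
          (Theta ![0, 0] 0 ((2 : ℂ) • τ) * Theta ![1 / 2, 0] 0 ((2 : ℂ) • τ))
      + Complex.exp (2 * Real.pi * Complex.I * ((b 1 : ℝ) : ℂ)) *
          (Theta ![1 / 2, 1 / 2] 0 ((2 : ℂ) • τ) * Theta ![0, 1 / 2] 0 ((2 : ℂ) • τ))
      + Complex.exp (2 * Real.pi * Complex.I * ((b 0 + b 1 : ℝ) : ℂ)) *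
          (Theta ![0, 1 / 2] 0 ((2 : ℂ) • τ) * Theta ![1 / 2, 1 / 2] 0 ((2 : ℂ) • τ)) := by
  rw [theta_sq a b hb hτ]
  rw [Fintype.sum_prod_type, Fintype.sum_bool]
  rw [Fintype.sum_bool, Fintype.sum_bool]
  rw [conv (fun i => a i + ((nu (true, true) i : ℤ) : ℝ) / 2) 0 (1/2) 1 0 
      (by norm_num [nu, ha0]) (by norm_num [nu, ha1]) _,
    conv (fun i => ((nu (true, true) i : ℤ) : ℝ) / 2) (1/2) (1/2) 0 0
      (by norm_num [nu]) (by norm_num [nu]) _,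
    conv (fun i => a i + ((nu (true, false) i : ℤ) : ℝ) / 2) 0 0 1 0 
      (by norm_num [nu, ha0]) (by norm_num [nu, ha1]) _,
    conv (fun i => ((nu (true, false) i : ℤ) : ℝ) / 2) (1/2) 0 0 0
      (by norm_num [nu]) (by norm_num [nu]) _,
    conv (fun i => a i + ((nu (false, true) i : ℤ) : ℝ) / 2) (1/2) (1/2) 0 0 
      (by norm_num [nu, ha0]) (by norm_num [nu, ha1]) _,
    conv (fun i => ((nu (false, true) i : ℤ) : ℝ) / 2) 0 (1/2) 0 0
      (by norm_num [nu]) (by norm_num [nu]) _,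
    conv (fun i => a i + ((nu (false, false) i : ℤ) : ℝ) / 2) (1/2) 0 0 0 
      (by norm_num [nu, ha0]) (by norm_num [nu, ha1]) _,
    conv (fun i => ((nu (false, false) i : ℤ) : ℝ) / 2) 0 0 0 0
      (by norm_num [nu]) (by norm_num [nu]) _]
  rw [show ((nu (false, false) 0 : ℤ) : ℂ) * (b 0 : ℂ) + ((nu (false, false) 1 : ℤ) : ℂ) * (b 1 : ℂ)
      = 0 by simp [nu]]
  rw [show ((nu (true, false) 0 : ℤ) : ℂ) * (b 0 : ℂ) + ((nu (true, false) 1 : ℤ) : ℂ) * (b 1 : ℂ)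
      = ((b 0 : ℝ) : ℂ) by simp [nu]]
  rw [show ((nu (false, true) 0 : ℤ) : ℂ) * (b 0 : ℂ) + ((nu (false, true) 1 : ℤ) : ℂ) * (b 1 : ℂ)
      = ((b 1 : ℝ) : ℂ) by simp [nu]]
  rw [show ((nu (true, true) 0 : ℤ) : ℂ) * (b 0 : ℂ) + ((nu (true, true) 1 : ℤ) : ℂ) * (b 1 : ℂ)
      = ((b 0 + b 1 : ℝ) : ℂ) by push_cast; simp [nu]]
  simp only [mul_zero, Complex.exp_zero]
  ring

lemma fam2 (a b : Fin 2 → ℝ) (hb : IsHalf b) (ha0 : a 0 = 0) (ha1 : a 1 = 1 / 2)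
    {τ : Matrix (Fin 2) (Fin 2) ℂ} (hτ : (Matrix.of fun i j => (τ i j).im).PosDef) :
    Theta a b τ ^ 2 =
      Theta ![0, 1 / 2] 0 ((2 : ℂ) • τ) * Theta ![0, 0] 0 ((2 : ℂ) • τ)
      + Complex.exp (2 * Real.pi * Complex.I * ((b 0 : ℝ) : ℂ)) *
          (Theta ![1 / 2, 1 / 2] 0 ((2 : ℂ) • τ) * Theta ![1 / 2, 0] 0 ((2 : ℂ) • τ))
      + Complex.exp (2 * Real.pi * Complex.I * ((b 1 : ℝ) : ℂ)) *
          (Theta ![0, 0] 0 ((2 : ℂ) • τ) * Theta ![0, 1 / 2] 0 ((2 : ℂ) • τ))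
      + Complex.exp (2 * Real.pi * Complex.I * ((b 0 + b 1 : ℝ) : ℂ)) *
          (Theta ![1 / 2, 0] 0 ((2 : ℂ) • τ) * Theta ![1 / 2, 1 / 2] 0 ((2 : ℂ) • τ)) := by
  rw [theta_sq a b hb hτ]
  rw [Fintype.sum_prod_type, Fintype.sum_bool]
  rw [Fintype.sum_bool, Fintype.sum_bool]
  rw [conv (fun i => a i + ((nu (true, true) i : ℤ) : ℝ) / 2) (1/2) 0 0 1 
      (by norm_num [nu, ha0]) (by norm_num [nu, ha1]) _,
    conv (fun i => ((nu (true, true) i : ℤ) : ℝ) / 2) (1/2) (1/2) 0 0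
      (by norm_num [nu]) (by norm_num [nu]) _,
    conv (fun i => a i + ((nu (true, false) i : ℤ) : ℝ) / 2) (1/2) (1/2) 0 0 
      (by norm_num [nu, ha0]) (by norm_num [nu, ha1]) _,
    conv (fun i => ((nu (true, false) i : ℤ) : ℝ) / 2) (1/2) 0 0 0
      (by norm_num [nu]) (by norm_num [nu]) _,
    conv (fun i => a i + ((nu (false, true) i : ℤ) : ℝ) / 2) 0 0 0 1 
      (by norm_num [nu, ha0]) (by norm_num [nu, ha1]) _,
    conv (fun i => ((nu (false, true) i : ℤ) : ℝ) / 2) 0 (1/2) 0 0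
      (by norm_num [nu]) (by norm_num [nu]) _,
    conv (fun i => a i + ((nu (false, false) i : ℤ) : ℝ) / 2) 0 (1/2) 0 0 
      (by norm_num [nu, ha0]) (by norm_num [nu, ha1]) _,
    conv (fun i => ((nu (false, false) i : ℤ) : ℝ) / 2) 0 0 0 0
      (by norm_num [nu]) (by norm_num [nu]) _]
  rw [show ((nu (false, false) 0 : ℤ) : ℂ) * (b 0 : ℂ) + ((nu (false, false) 1 : ℤ) : ℂ) * (b 1 : ℂ)
      = 0 by simp [nu]]
  rw [show ((nu (true, false) 0 : ℤ) : ℂ) * (b 0 : ℂ) + ((nu (true, false) 1 : ℤ) : ℂ) * (b 1 : ℂ)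
      = ((b 0 : ℝ) : ℂ) by simp [nu]]
  rw [show ((nu (false, true) 0 : ℤ) : ℂ) * (b 0 : ℂ) + ((nu (false, true) 1 : ℤ) : ℂ) * (b 1 : ℂ)
      = ((b 1 : ℝ) : ℂ) by simp [nu]]
  rw [show ((nu (true, true) 0 : ℤ) : ℂ) * (b 0 : ℂ) + ((nu (true, true) 1 : ℤ) : ℂ) * (b 1 : ℂ)
      = ((b 0 + b 1 : ℝ) : ℂ) by push_cast; simp [nu]]
  simp only [mul_zero, Complex.exp_zero]
  ring

lemma fam3 (a b : Fin 2 → ℝ) (hb : IsHalf b) (ha0 : a 0 = 1 / 2) (ha1 : a 1 = 1 / 2)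
    {τ : Matrix (Fin 2) (Fin 2) ℂ} (hτ : (Matrix.of fun i j => (τ i j).im).PosDef) :
    Theta a b τ ^ 2 =
      Theta ![1 / 2, 1 / 2] 0 ((2 : ℂ) • τ) * Theta ![0, 0] 0 ((2 : ℂ) • τ)
      + Complex.exp (2 * Real.pi * Complex.I * ((b 0 : ℝ) : ℂ)) *
          (Theta ![0, 1 / 2] 0 ((2 : ℂ) • τ) * Theta ![1 / 2, 0] 0 ((2 : ℂ) • τ))
      + Complex.exp (2 * Real.pi * Complex.I * ((b 1 : ℝ) : ℂ)) *
          (Theta ![1 / 2, 0] 0 ((2 : ℂ) • τ) * Theta ![0, 1 / 2] 0 ((2 : ℂ) • τ))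
      + Complex.exp (2 * Real.pi * Complex.I * ((b 0 + b 1 : ℝ) : ℂ)) *
          (Theta ![0, 0] 0 ((2 : ℂ) • τ) * Theta ![1 / 2, 1 / 2] 0 ((2 : ℂ) • τ)) := by
  rw [theta_sq a b hb hτ]
  rw [Fintype.sum_prod_type, Fintype.sum_bool]
  rw [Fintype.sum_bool, Fintype.sum_bool]
  rw [conv (fun i => a i + ((nu (true, true) i : ℤ) : ℝ) / 2) 0 0 1 1 
      (by norm_num [nu, ha0]) (by norm_num [nu, ha1]) _,
    conv (fun i => ((nu (true, true) i : ℤ) : ℝ) / 2) (1/2) (1/2) 0 0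
      (by norm_num [nu]) (by norm_num [nu]) _,
    conv (fun i => a i + ((nu (true, false) i : ℤ) : ℝ) / 2) 0 (1/2) 1 0 
      (by norm_num [nu, ha0]) (by norm_num [nu, ha1]) _,
    conv (fun i => ((nu (true, false) i : ℤ) : ℝ) / 2) (1/2) 0 0 0
      (by norm_num [nu]) (by norm_num [nu]) _,
    conv (fun i => a i + ((nu (false, true) i : ℤ) : ℝ) / 2) (1/2) 0 0 1 
      (by norm_num [nu, ha0]) (by norm_num [nu, ha1]) _,
    conv (fun i => ((nu (false, true) i : ℤ) : ℝ) / 2) 0 (1/2) 0 0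
      (by norm_num [nu]) (by norm_num [nu]) _,
    conv (fun i => a i + ((nu (false, false) i : ℤ) : ℝ) / 2) (1/2) (1/2) 0 0 
      (by norm_num [nu, ha0]) (by norm_num [nu, ha1]) _,
    conv (fun i => ((nu (false, false) i : ℤ) : ℝ) / 2) 0 0 0 0
      (by norm_num [nu]) (by norm_num [nu]) _]
  rw [show ((nu (false, false) 0 : ℤ) : ℂ) * (b 0 : ℂ) + ((nu (false, false) 1 : ℤ) : ℂ) * (b 1 : ℂ)
      = 0 by simp [nu]]
  rw [show ((nu (true, false) 0 : ℤ) : ℂ) * (b 0 : ℂ) + ((nu (true, false) 1 : ℤ) : ℂ) * (b 1 : ℂ)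
      = ((b 0 : ℝ) : ℂ) by simp [nu]]
  rw [show ((nu (false, true) 0 : ℤ) : ℂ) * (b 0 : ℂ) + ((nu (false, true) 1 : ℤ) : ℂ) * (b 1 : ℂ)
      = ((b 1 : ℝ) : ℂ) by simp [nu]]
  rw [show ((nu (true, true) 0 : ℤ) : ℂ) * (b 0 : ℂ) + ((nu (true, true) 1 : ℤ) : ℂ) * (b 1 : ℂ)
      = ((b 0 + b 1 : ℝ) : ℂ) by push_cast; simp [nu]]
  simp only [mul_zero, Complex.exp_zero]
  ring

def FF (s t : ℝ) (τ : {τ : Matrix (Fin 2) (Fin 2) ℂ // IsSiegel τ}) : ℂ :=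
  Theta ![s, t] 0 ((2 : ℂ) • τ.1)

def G0 : {τ : Matrix (Fin 2) (Fin 2) ℂ // IsSiegel τ} → ℂ := fun τ =>
  FF 0 0 τ ^ 4 + FF (1 / 2) 0 τ ^ 4 + FF 0 (1 / 2) τ ^ 4 + FF (1 / 2) (1 / 2) τ ^ 4
def G1 : {τ : Matrix (Fin 2) (Fin 2) ℂ // IsSiegel τ} → ℂ := fun τ =>
  FF 0 0 τ ^ 2 * FF (1 / 2) 0 τ ^ 2 + FF 0 (1 / 2) τ ^ 2 * FF (1 / 2) (1 / 2) τ ^ 2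
def G2 : {τ : Matrix (Fin 2) (Fin 2) ℂ // IsSiegel τ} → ℂ := fun τ =>
  FF 0 0 τ ^ 2 * FF 0 (1 / 2) τ ^ 2 + FF (1 / 2) 0 τ ^ 2 * FF (1 / 2) (1 / 2) τ ^ 2
def G3 : {τ : Matrix (Fin 2) (Fin 2) ℂ // IsSiegel τ} → ℂ := fun τ =>
  FF 0 0 τ ^ 2 * FF (1 / 2) (1 / 2) τ ^ 2 + FF (1 / 2) 0 τ ^ 2 * FF 0 (1 / 2) τ ^ 2
def G4 : {τ : Matrix (Fin 2) (Fin 2) ℂ // IsSiegel τ} → ℂ := fun τ =>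
  FF 0 0 τ * FF (1 / 2) 0 τ * FF 0 (1 / 2) τ * FF (1 / 2) (1 / 2) τ

def gens : Fin 5 → ({τ : Matrix (Fin 2) (Fin 2) ℂ // IsSiegel τ} → ℂ) := ![G0, G1, G2, G3, G4]

example : gens 2 = G2 := rfl
example : gens 4 = G4 := rfl

lemma mem_span_gens (f : {τ : Matrix (Fin 2) (Fin 2) ℂ // IsSiegel τ} → ℂ)
    (c0 c1 c2 c3 c4 : ℂ)
    (h : ∀ τ, f τ = c0 * G0 τ + c1 * G1 τ + c2 * G2 τ + c3 * G3 τ + c4 * G4 τ) :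
    f ∈ Submodule.span ℂ (Set.range gens) := by
  have hf : f = c0 • G0 + c1 • G1 + c2 • G2 + c3 • G3 + c4 • G4 := by
    funext τ
    simp only [Pi.add_apply, Pi.smul_apply, smul_eq_mul]
    exact h τ
  rw [hf]
  have m : ∀ i : Fin 5, gens i ∈ Submodule.span ℂ (Set.range gens) := fun i =>
    Submodule.subset_span ⟨i, rfl⟩
  have m0 := m 0; have m1 := m 1; have m2 := m 2; have m3 := m 3; have m4 := m 4
  exact Submodule.add_mem _ (Submodule.add_mem _ (Submodule.add_mem _ (Submodule.add_mem _
    (Submodule.smul_mem _ _ m0) (Submodule.smul_mem _ _ m1)) (Submodule.smul_mem _ _ m2))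
    (Submodule.smul_mem _ _ m3)) (Submodule.smul_mem _ _ m4)

/-- The ten fourth powers of even theta constants, as functions on `H₂`, span a
complex vector space of dimension at most 6. -/
theorem theta_pow_four_span_rank_le_six :
    Module.rank ℂ (Submodule.span ℂ
      {f : {τ : Matrix (Fin 2) (Fin 2) ℂ // IsSiegel τ} → ℂ |
        ∃ a b : Fin 2 → ℝ, IsHalf a ∧ IsHalf b ∧
          (∃ k : ℤ, 4 * ∑ i, a i * b i = 2 * (k : ℝ)) ∧
          f = fun τ => Theta a b τ.1 ^ 4}) ≤ 6 := by
  have hsub : {f : {τ : Matrix (Fin 2) (Fin 2) ℂ // IsSiegel τ} → ℂ |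
        ∃ a b : Fin 2 → ℝ, IsHalf a ∧ IsHalf b ∧
          (∃ k : ℤ, 4 * ∑ i, a i * b i = 2 * (k : ℝ)) ∧
          f = fun τ => Theta a b τ.1 ^ 4} ⊆
      (Submodule.span ℂ (Set.range gens) : Set _) := by
    rintro f ⟨a, b, ha, hb, hev, rfl⟩
    rcases ha 0 with ha0 | ha0 <;> rcases ha 1 with ha1 | ha1 <;>
      rcases hb 0 with hb0 | hb0 <;> rcases hb 1 with hb1 | hb1
    · refine mem_span_gens _ 1 2 2 2 0 fun τ => ?_
      have h2 := fam0 a b hb ha0 ha1 τ.2.2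
      rw [sigma_zero (b 0) hb0, sigma_zero (b 1) hb1,
        sigma_zero (b 0 + b 1) (by rw [hb0, hb1]; norm_num)] at h2
      show Theta a b τ.1 ^ 4 = _
      rw [show Theta a b τ.1 ^ 4 = (Theta a b τ.1 ^ 2) ^ 2 by ring, h2]
      simp only [G0, G1, G2, G3, G4, FF]
      ring
    · refine mem_span_gens _ 1 2 (-2) (-2) 0 fun τ => ?_
      have h2 := fam0 a b hb ha0 ha1 τ.2.2
      rw [sigma_zero (b 0) hb0, sigma_half (b 1) hb1,
        sigma_half (b 0 + b 1) (by rw [hb0, hb1]; norm_num)] at h2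
      show Theta a b τ.1 ^ 4 = _
      rw [show Theta a b τ.1 ^ 4 = (Theta a b τ.1 ^ 2) ^ 2 by ring, h2]
      simp only [G0, G1, G2, G3, G4, FF]
      ring
    · refine mem_span_gens _ 1 (-2) 2 (-2) 0 fun τ => ?_
      have h2 := fam0 a b hb ha0 ha1 τ.2.2
      rw [sigma_half (b 0) hb0, sigma_zero (b 1) hb1,
        sigma_half (b 0 + b 1) (by rw [hb0, hb1]; norm_num)] at h2
      show Theta a b τ.1 ^ 4 = _
      rw [show Theta a b τ.1 ^ 4 = (Theta a b τ.1 ^ 2) ^ 2 by ring, h2]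
      simp only [G0, G1, G2, G3, G4, FF]
      ring
    · refine mem_span_gens _ 1 (-2) (-2) 2 0 fun τ => ?_
      have h2 := fam0 a b hb ha0 ha1 τ.2.2
      rw [sigma_half (b 0) hb0, sigma_half (b 1) hb1,
        sigma_one (b 0 + b 1) (by rw [hb0, hb1]; norm_num)] at h2
      show Theta a b τ.1 ^ 4 = _
      rw [show Theta a b τ.1 ^ 4 = (Theta a b τ.1 ^ 2) ^ 2 by ring, h2]
      simp only [G0, G1, G2, G3, G4, FF]
      ring
    · refine mem_span_gens _ 0 0 4 0 8 fun τ => ?_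
      have h2 := fam2 a b hb ha0 ha1 τ.2.2
      rw [sigma_zero (b 0) hb0, sigma_zero (b 1) hb1,
        sigma_zero (b 0 + b 1) (by rw [hb0, hb1]; norm_num)] at h2
      show Theta a b τ.1 ^ 4 = _
      rw [show Theta a b τ.1 ^ 4 = (Theta a b τ.1 ^ 2) ^ 2 by ring, h2]
      simp only [G0, G1, G2, G3, G4, FF]
      ring
    · exfalso
      obtain ⟨k, hk⟩ := hev
      rw [Fin.sum_univ_two, ha0, ha1, hb0, hb1] at hk
      have h1 : ((2 * k : ℤ) : ℝ) = 1 := by push_cast; linarith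
      have h2 : (2 * k : ℤ) = 1 := by exact_mod_cast h1
      omega
    · refine mem_span_gens _ 0 0 4 0 (-8) fun τ => ?_
      have h2 := fam2 a b hb ha0 ha1 τ.2.2
      rw [sigma_half (b 0) hb0, sigma_zero (b 1) hb1,
        sigma_half (b 0 + b 1) (by rw [hb0, hb1]; norm_num)] at h2
      show Theta a b τ.1 ^ 4 = _
      rw [show Theta a b τ.1 ^ 4 = (Theta a b τ.1 ^ 2) ^ 2 by ring, h2]
      simp only [G0, G1, G2, G3, G4, FF]
      ring
    · exfalso
      obtain ⟨k, hk⟩ := hev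
      rw [Fin.sum_univ_two, ha0, ha1, hb0, hb1] at hk
      have h1 : ((2 * k : ℤ) : ℝ) = 1 := by push_cast; linarith
      have h2 : (2 * k : ℤ) = 1 := by exact_mod_cast h1
      omega
    · refine mem_span_gens _ 0 4 0 0 8 fun τ => ?_
      have h2 := fam1 a b hb ha0 ha1 τ.2.2
      rw [sigma_zero (b 0) hb0, sigma_zero (b 1) hb1,
        sigma_zero (b 0 + b 1) (by rw [hb0, hb1]; norm_num)] at h2
      show Theta a b τ.1 ^ 4 = _
      rw [show Theta a b τ.1 ^ 4 = (Theta a b τ.1 ^ 2) ^ 2 by ring, h2]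
      simp only [G0, G1, G2, G3, G4, FF]
      ring
    · refine mem_span_gens _ 0 4 0 0 (-8) fun τ => ?_
      have h2 := fam1 a b hb ha0 ha1 τ.2.2
      rw [sigma_zero (b 0) hb0, sigma_half (b 1) hb1,
        sigma_half (b 0 + b 1) (by rw [hb0, hb1]; norm_num)] at h2
      show Theta a b τ.1 ^ 4 = _
      rw [show Theta a b τ.1 ^ 4 = (Theta a b τ.1 ^ 2) ^ 2 by ring, h2]
      simp only [G0, G1, G2, G3, G4, FF]
      ring
    · exfalso
      obtain ⟨k, hk⟩ := hev
      rw [Fin.sum_univ_two, ha0, ha1, hb0, hb1] at hk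
      have h1 : ((2 * k : ℤ) : ℝ) = 1 := by push_cast; linarith
      have h2 : (2 * k : ℤ) = 1 := by exact_mod_cast h1
      omega
    · exfalso
      obtain ⟨k, hk⟩ := hev
      rw [Fin.sum_univ_two, ha0, ha1, hb0, hb1] at hk
      have h1 : ((2 * k : ℤ) : ℝ) = 1 := by push_cast; linarith
      have h2 : (2 * k : ℤ) = 1 := by exact_mod_cast h1
      omega
    · refine mem_span_gens _ 0 0 0 4 8 fun τ => ?_
      have h2 := fam3 a b hb ha0 ha1 τ.2.2
      rw [sigma_zero (b 0) hb0, sigma_zero (b 1) hb1,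
        sigma_zero (b 0 + b 1) (by rw [hb0, hb1]; norm_num)] at h2
      show Theta a b τ.1 ^ 4 = _
      rw [show Theta a b τ.1 ^ 4 = (Theta a b τ.1 ^ 2) ^ 2 by ring, h2]
      simp only [G0, G1, G2, G3, G4, FF]
      ring
    · exfalso
      obtain ⟨k, hk⟩ := hev
      rw [Fin.sum_univ_two, ha0, ha1, hb0, hb1] at hk
      have h1 : ((2 * k : ℤ) : ℝ) = 1 := by push_cast; linarith
      have h2 : (2 * k : ℤ) = 1 := by exact_mod_cast h1
      omega
    · exfalso
      obtain ⟨k, hk⟩ := hev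
      rw [Fin.sum_univ_two, ha0, ha1, hb0, hb1] at hk
      have h1 : ((2 * k : ℤ) : ℝ) = 1 := by push_cast; linarith
      have h2 : (2 * k : ℤ) = 1 := by exact_mod_cast h1
      omega
    · refine mem_span_gens _ 0 0 0 4 (-8) fun τ => ?_
      have h2 := fam3 a b hb ha0 ha1 τ.2.2
      rw [sigma_half (b 0) hb0, sigma_half (b 1) hb1,
        sigma_one (b 0 + b 1) (by rw [hb0, hb1]; norm_num)] at h2
      show Theta a b τ.1 ^ 4 = _
      rw [show Theta a b τ.1 ^ 4 = (Theta a b τ.1 ^ 2) ^ 2 by ring, h2]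
      simp only [G0, G1, G2, G3, G4, FF]
      ring
  refine le_trans (Submodule.rank_mono (Submodule.span_le.2 hsub)) ?_
  refine le_trans (rank_span_le (Set.range gens)) ?_
  refine le_trans (Cardinal.mk_range_le) ?_
  simp only [Cardinal.mk_fin]
  norm_num
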